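/- arXiv:1502.07966 — 6 statements merged into one kernel-verified Lean document; each statement's English description precedes it below -/
import Mathlib

section
/- Let K ≥ 2 and let H be a K×K complex matrix such that ‖H i j‖ ≤ ε for all indices i ≠ j, ‖H i j‖ ≤ M for all i, j, and det H ≠ 0. Then for all indices k ≠ j, the (j,k) entry of the inverse matrix satisfies ‖(H⁻¹) j k‖ ≤ (K−1)! · ε · M^(K−2) / ‖det H‖. -/
/-- Entries of the inverse of a complex matrix with small off-diagonal entries:
if `‖H i j‖ ≤ ε` for `i ≠ j`, `‖H i j‖ ≤ M` for all `i j`, and `det H ≠ 0`, then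
`‖(H⁻¹) j k‖ ≤ (K-1)! · ε · M^(K-2) / ‖det H‖` for `k ≠ j`. -/
theorem inverse_offdiag_entry_bound (K : ℕ) (hK : 2 ≤ K)
    (H : Matrix (Fin K) (Fin K) ℂ) (ε M : ℝ)
    (hoff : ∀ i j : Fin K, i ≠ j → ‖H i j‖ ≤ ε)
    (hall : ∀ i j : Fin K, ‖H i j‖ ≤ M)
    (hdet : H.det ≠ 0) :
    ∀ k j : Fin K, k ≠ j →
      ‖H⁻¹ j k‖ ≤
        (Nat.factorial (K - 1) : ℝ) * ε * M ^ (K - 2) / ‖H.det‖ := by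
  obtain ⟨n, rfl⟩ : ∃ n, K = n + 2 := ⟨K - 2, by omega⟩
  intro k j hkj
  have hM : 0 ≤ M := (norm_nonneg _).trans (hall 0 0)
  have hdetpos : 0 < ‖H.det‖ := norm_pos_iff.mpr hdet
  have key : ‖Matrix.adjugate H j k‖ ≤
      (Nat.factorial (n + 1) : ℝ) * ε * M ^ n := by
    rw [Matrix.adjugate_fin_succ_eq_det_submatrix, norm_mul]
    have h1 : ‖(-1 : ℂ) ^ (k + j : ℕ)‖ = 1 := by
      rw [norm_pow]; simp
    rw [h1, one_mul, Matrix.det_apply]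
    calc ‖∑ σ : Equiv.Perm (Fin (n + 1)),
            Equiv.Perm.sign σ • ∏ i, (H.submatrix k.succAbove j.succAbove) (σ i) i‖
        ≤ ∑ σ : Equiv.Perm (Fin (n + 1)),
            ‖Equiv.Perm.sign σ • ∏ i, (H.submatrix k.succAbove j.succAbove) (σ i) i‖ :=
          norm_sum_le _ _
      _ ≤ ∑ _σ : Equiv.Perm (Fin (n + 1)), ε * M ^ n := by
          refine Finset.sum_le_sum fun σ _ => ?_
          have hs : ‖Equiv.Perm.sign σ •
              ∏ i, (H.submatrix k.succAbove j.succAbove) (σ i) i‖ =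
              ‖∏ i, (H.submatrix k.succAbove j.succAbove) (σ i) i‖ := by
            rcases Int.units_eq_one_or (Equiv.Perm.sign σ) with h | h <;>
              simp [h, Units.smul_def]
          rw [hs, norm_prod]
          obtain ⟨i₀, hi₀⟩ := Fin.exists_succAbove_eq hkj
          have hbound : ∀ i ∈ Finset.univ,
              ‖(H.submatrix k.succAbove j.succAbove) (σ i) i‖ ≤
              (if i = i₀ then ε else M) := by
            intro i _
            by_cases h : i = i₀
            · simp only [if_pos h, Matrix.submatrix_apply, h, hi₀]
              exact hoff _ _ (Fin.succAbove_ne k (σ i₀))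
            · simp only [if_neg h, Matrix.submatrix_apply]
              exact hall _ _
          calc (∏ i, ‖(H.submatrix k.succAbove j.succAbove) (σ i) i‖)
              ≤ ∏ i, (if i = i₀ then ε else M) :=
                Finset.prod_le_prod (fun i _ => norm_nonneg _) hbound
            _ = ε * M ^ n := by
                rw [← Finset.mul_prod_erase Finset.univ _ (Finset.mem_univ i₀)]
                rw [if_pos rfl]
                congr 1
                rw [Finset.prod_congr rfl (fun i hi => if_neg (Finset.mem_erase.mp hi).1),
                  Finset.prod_const]
                congr 1
                simp [Finset.card_erase_of_mem]
      _ = (Nat.factorial (n + 1) : ℝ) * ε * M ^ n := by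
          rw [Finset.sum_const, Finset.card_univ, Fintype.card_perm, Fintype.card_fin,
            nsmul_eq_mul, mul_assoc]
  have hinv : H⁻¹ j k = (H.det)⁻¹ * Matrix.adjugate H j k := by
    rw [Matrix.inv_def, Matrix.smul_apply, Ring.inverse_eq_inv', smul_eq_mul]
  rw [hinv, norm_mul, norm_inv]
  rw [div_eq_inv_mul, show n + 2 - 1 = n + 1 from rfl, show n + 2 - 2 = n from rfl]
  exact mul_le_mul_of_nonneg_left key (by positivity)
end

section
/- For all real a > 0 and r > 1, the integral ∫_{a/(r−1)}^∞ log₂((1 + x/a) · (r−1)/r) · e^{−x} dx equals (e^a / ln 2) · E1(a·r/(r−1)). -/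
open MeasureTheory

/-- The exponential integral `E1 z = ∫_z^∞ e^{-t}/t dt`. -/
noncomputable def expIntegralE1 (z : ℝ) : ℝ := ∫ t in Set.Ioi z, Real.exp (-t) / t

open Set Filter Real Topology

lemma aux_int_u_exp (c : ℝ) (hc : 0 < c) :
    IntegrableOn (fun u : ℝ => u * Real.exp (-u)) (Ioi c) := by
  have h := Real.GammaIntegral_convergent (s := 2) (by norm_num)
  have h' : IntegrableOn (fun u : ℝ => u * Real.exp (-u)) (Ioi 0) := by
    refine h.congr_fun (fun x hx => ?_) measurableSet_Ioi
    simp only [show (2:ℝ) - 1 = 1 by norm_num, Real.rpow_one]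
    ring
  exact h'.mono_set (Ioi_subset_Ioi hc.le)

lemma aux_int_log (c : ℝ) (hc : 0 < c) :
    IntegrableOn (fun u : ℝ => Real.log (u / c) * Real.exp (-u)) (Ioi c) := by
  refine Integrable.mono' (((aux_int_u_exp c hc).const_mul (1/c))) ?_ ?_
  · exact (((Real.measurable_log.comp (measurable_id.div_const c)).mul
      (Real.measurable_exp.comp measurable_neg)).aestronglyMeasurable)
  · filter_upwards [ae_restrict_mem measurableSet_Ioi] with u hu
    have hu' : (1:ℝ) ≤ u / c := (one_le_div hc).mpr (le_of_lt hu)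
    have h0 : 0 ≤ Real.log (u / c) := Real.log_nonneg hu'
    have hle : Real.log (u / c) ≤ u / c :=
      (Real.log_le_sub_one_of_pos (by linarith)).trans (by linarith)
    rw [Real.norm_eq_abs, abs_of_nonneg (mul_nonneg h0 (Real.exp_pos _).le)]
    have : Real.log (u / c) * Real.exp (-u) ≤ (u / c) * Real.exp (-u) :=
      mul_le_mul_of_nonneg_right hle (Real.exp_pos _).le
    calc Real.log (u / c) * Real.exp (-u) ≤ (u / c) * Real.exp (-u) := this
    _ = 1 / c * (u * Real.exp (-u)) := by ring

lemma aux_int_inv (c : ℝ) (hc : 0 < c) :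
    IntegrableOn (fun u : ℝ => Real.exp (-u) / u) (Ioi c) := by
  refine Integrable.mono' (((exp_neg_integrableOn_Ioi c one_pos).const_mul (1/c))) ?_ ?_
  · exact ((Real.measurable_exp.comp measurable_neg).div measurable_id).aestronglyMeasurable
  · filter_upwards [ae_restrict_mem measurableSet_Ioi] with u hu
    have hu0 : 0 < u := hc.trans hu
    rw [Real.norm_eq_abs, abs_of_nonneg (div_nonneg (Real.exp_pos _).le hu0.le)]
    have h1 : Real.exp (-u) / u ≤ Real.exp (-u) / c := by gcongr; exact hu.le
    have h2 : Real.exp (-u) / c = 1 / c * Real.exp (-1 * u) := by ring_nf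
    linarith

/-- Integration by parts: `∫_c^∞ log(u/c) e^{-u} du = ∫_c^∞ e^{-u}/u du`. -/
lemma key_parts (c : ℝ) (hc : 0 < c) :
    ∫ u in Ioi c, Real.log (u / c) * Real.exp (-u)
      = ∫ u in Ioi c, Real.exp (-u) / u := by
  set F : ℝ → ℝ := fun u => -(Real.exp (-u) * Real.log (u / c)) with hF
  have hderiv : ∀ u ∈ Ioi c, HasDerivAt F
      (Real.log (u / c) * Real.exp (-u) - Real.exp (-u) / u) u := by
    intro u hu
    have hu0 : 0 < u := hc.trans hu
    have h1 : HasDerivAt (fun u : ℝ => Real.exp (-u)) (-Real.exp (-u)) u := by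
      simpa using ((hasDerivAt_id u).neg).exp
    have h2 : HasDerivAt (fun u : ℝ => Real.log (u / c)) (1 / u) u := by
      have hdiv : HasDerivAt (fun u : ℝ => u / c) (1 / c) u := by
        simpa using (hasDerivAt_id u).div_const c
      have := (Real.hasDerivAt_log (by positivity : u / c ≠ 0)).comp u hdiv
      refine this.congr_deriv ?_
      field_simp
    have := (h1.mul h2).neg
    refine this.congr_deriv ?_
    ring
  have hcont : ContinuousWithinAt F (Ici c) c := by
    have h1 : ContinuousAt (fun u : ℝ => Real.log (u / c)) c :=
      (Real.continuousAt_log (by positivity)).comp (continuousAt_id.div_const c)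
    exact (((Real.continuous_exp.comp continuous_neg).continuousAt.mul h1).neg).continuousWithinAt
  have h0 : Tendsto (fun u : ℝ => u * Real.exp (-u)) atTop (𝓝 0) := by
    simpa using Real.tendsto_pow_mul_exp_neg_atTop_nhds_zero 1
  have htend : Tendsto F atTop (𝓝 0) := by
    rw [show (0:ℝ) = -0 by norm_num]
    apply Tendsto.neg
    apply squeeze_zero' (g := fun u => (1/c) * (u * Real.exp (-u)))
    · filter_upwards [eventually_ge_atTop c] with u hu
      have hu' : (1:ℝ) ≤ u / c := (one_le_div hc).mpr hu
      exact mul_nonneg (Real.exp_pos _).le (Real.log_nonneg hu')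
    · filter_upwards [eventually_ge_atTop c] with u hu
      have hu' : (1:ℝ) ≤ u / c := (one_le_div hc).mpr hu
      have hle : Real.log (u / c) ≤ u / c :=
        (Real.log_le_sub_one_of_pos (by linarith)).trans (by linarith)
      calc Real.exp (-u) * Real.log (u / c) ≤ Real.exp (-u) * (u / c) :=
            mul_le_mul_of_nonneg_left hle (Real.exp_pos _).le
        _ = 1 / c * (u * Real.exp (-u)) := by ring
    · simpa using h0.const_mul (1/c)
  have hint := integral_Ioi_of_hasDerivAt_of_tendsto hcont hderiv
    ((aux_int_log c hc).sub (aux_int_inv c hc)) htend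
  have hFc : F c = 0 := by
    simp [hF, div_self hc.ne']
  rw [hFc, sub_zero] at hint
  rw [integral_sub (aux_int_log c hc) (aux_int_inv c hc)] at hint
  linarith [hint]

/-- For `a > 0` and `r > 1`,
`∫_{a/(r-1)}^∞ log₂((1 + x/a)·(r-1)/r) e^{-x} dx = (e^a/ln 2) · E1(a r/(r-1))`. -/
theorem integral_logb_rate_exp (a r : ℝ) (ha : 0 < a) (hr : 1 < r) :
    ∫ x in Set.Ioi (a / (r - 1)),
        Real.logb 2 ((1 + x / a) * (r - 1) / r) * Real.exp (-x)
      = (Real.exp a / Real.log 2) * expIntegralE1 (a * r / (r - 1)) := by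
  have hr1 : 0 < r - 1 := by linarith
  set b : ℝ := a / (r - 1) with hbdef
  set c : ℝ := a * r / (r - 1) with hcdef
  have hb : 0 < b := by positivity
  have hc : 0 < c := by positivity
  have hbc : b + a = c := by
    rw [hbdef, hcdef, div_add' _ _ _ hr1.ne']
    ring
  set g : ℝ → ℝ := fun u => (Real.exp a / Real.log 2) * (Real.log (u / c) * Real.exp (-u))
    with hg
  have step1 : ∫ x in Set.Ioi b, Real.logb 2 ((1 + x / a) * (r - 1) / r) * Real.exp (-x)
      = ∫ x in Set.Ioi b, g (x + a) := by
    refine setIntegral_congr_fun measurableSet_Ioi (fun x hx => ?_)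
    have hx0 : 0 < x := hb.trans hx
    have hr0 : 0 < r := by linarith
    have harg : (1 + x / a) * (r - 1) / r = (x + a) / c := by
      rw [hcdef, eq_div_iff (by positivity : a * r / (r - 1) ≠ 0)]
      field_simp
      ring
    rw [harg, hg, Real.logb]
    have hexp : Real.exp a * Real.exp (-(x + a)) = Real.exp (-x) := by
      rw [← Real.exp_add]; ring_nf
    show Real.log ((x + a) / c) / Real.log 2 * Real.exp (-x)
        = Real.exp a / Real.log 2 * (Real.log ((x + a) / c) * Real.exp (-(x + a)))
    rw [show Real.exp a / Real.log 2 * (Real.log ((x + a) / c) * Real.exp (-(x + a)))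
        = Real.log ((x + a) / c) / Real.log 2 * (Real.exp a * Real.exp (-(x + a))) from by
        ring, hexp]
  have step2 : ∫ x in Set.Ioi b, g (x + a) = ∫ u in Set.Ioi c, g u := by
    have hmp : MeasureTheory.MeasurePreserving (fun x : ℝ => x + a) volume volume :=
      measurePreserving_add_right volume a
    have hemb : MeasurableEmbedding (fun x : ℝ => x + a) :=
      (MeasurableEquiv.addRight a).measurableEmbedding
    have hpre : (fun x : ℝ => x + a) ⁻¹' (Set.Ioi c) = Set.Ioi b := by
      ext x
      simp only [Set.mem_preimage, Set.mem_Ioi]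
      constructor <;> intro h <;> linarith [hbc]
    calc ∫ x in Set.Ioi b, g (x + a)
        = ∫ x in (fun x : ℝ => x + a) ⁻¹' (Set.Ioi c), g (x + a) := by rw [hpre]
      _ = ∫ u in Set.Ioi c, g u := hmp.setIntegral_preimage_emb hemb g (Set.Ioi c)
  rw [step1, step2, hg]
  rw [integral_const_mul, key_parts c hc]
  rfl
end

section
/- For all real P, h, N₀, w > 0 and every real γ, the function g(C) = γ·C − w · log₂(2^C · (P·h + N₀) / (2^C · N₀ + P·h)) is strictly convex on ℝ. -/
theorem aux_strictconvex (c1 c2 k L N₀ B : ℝ) (hk : 0 < k) (hL : 0 < L)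
    (hN : 0 < N₀) (hB : 0 < B) :
    StrictConvexOn ℝ Set.univ
      (fun x : ℝ => (c1 * x - c2) + k * Real.log (N₀ * Real.exp (L * x) + B)) := by
  set ψ : ℝ → ℝ := fun x => (c1 * x - c2) + k * Real.log (N₀ * Real.exp (L * x) + B) with hψ
  have htpos : ∀ x : ℝ, 0 < N₀ * Real.exp (L * x) + B := by
    intro x; positivity
  have hexp : ∀ x : ℝ, HasDerivAt (fun x : ℝ => Real.exp (L * x)) (Real.exp (L * x) * L) x := by
    intro x
    simpa using ((hasDerivAt_id x).const_mul L).exp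
  have ht : ∀ x : ℝ, HasDerivAt (fun x : ℝ => N₀ * Real.exp (L * x) + B)
      (N₀ * (Real.exp (L * x) * L)) x := by
    intro x
    exact ((hexp x).const_mul N₀).add_const B
  have hd1 : ∀ x : ℝ, HasDerivAt ψ
      (c1 + k * (N₀ * (Real.exp (L * x) * L) / (N₀ * Real.exp (L * x) + B))) x := by
    intro x
    have hlog := (ht x).log (ne_of_gt (htpos x))
    have := (((hasDerivAt_id x).const_mul c1).sub_const c2).add (hlog.const_mul k)
    exact this.congr_deriv (by ring)
  have hderiv1 : deriv ψ = fun x =>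
      c1 + k * (N₀ * (Real.exp (L * x) * L) / (N₀ * Real.exp (L * x) + B)) := by
    funext x; exact (hd1 x).deriv
  have hd2 : ∀ x : ℝ, HasDerivAt (deriv ψ)
      (k * (N₀ * L * L * Real.exp (L * x) * B / (N₀ * Real.exp (L * x) + B) ^ 2)) x := by
    intro x
    rw [hderiv1]
    have hu : HasDerivAt (fun x : ℝ => N₀ * (Real.exp (L * x) * L))
        (N₀ * (Real.exp (L * x) * L * L)) x := by
      exact ((hexp x).mul_const L).const_mul N₀
    have hq := (hu.div (ht x) (ne_of_gt (htpos x))).const_mul k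
    have := (hasDerivAt_const x c1).add hq
    exact this.congr_deriv (by rw [zero_add]; congr 1; congr 1; ring)
  apply strictConvexOn_of_deriv2_pos convex_univ
  · intro x _
    exact (hd1 x).differentiableAt.continuousAt.continuousWithinAt
  · intro x _
    have : deriv^[2] ψ x = deriv (deriv ψ) x := by
      simp [Function.iterate_succ, Function.comp]
    rw [this, (hd2 x).deriv]
    positivity

/-- For `P, h, N₀, w > 0` and any real `γ`, the per-flow per-stage objective
`g(C) = γ C - w log₂(2^C (Ph+N₀)/(2^C N₀ + Ph))` is strictly convex on `ℝ`. -/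
theorem perStage_objective_strictConvex (P h N₀ w γ : ℝ)
    (hP : 0 < P) (hh : 0 < h) (hN : 0 < N₀) (hw : 0 < w) :
    StrictConvexOn ℝ Set.univ
      (fun C : ℝ =>
        γ * C - w * Real.logb 2 ((2 : ℝ) ^ C * (P * h + N₀) / ((2 : ℝ) ^ C * N₀ + P * h))) := by
  have hL : (0:ℝ) < Real.log 2 := Real.log_pos one_lt_two
  have hB : 0 < P * h := mul_pos hP hh
  have hA : 0 < P * h + N₀ := by positivity
  have hfun : (fun C : ℝ =>
        γ * C - w * Real.logb 2 ((2 : ℝ) ^ C * (P * h + N₀) / ((2 : ℝ) ^ C * N₀ + P * h)))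
      = fun C : ℝ => (((γ - w) * C - w * Real.logb 2 (P * h + N₀))
        + (w / Real.log 2) * Real.log (N₀ * Real.exp (Real.log 2 * C) + P * h)) := by
    funext C
    have h2C : (2:ℝ) ^ C = Real.exp (Real.log 2 * C) := by
      rw [Real.rpow_def_of_pos (by norm_num)]
    have hepos : 0 < Real.exp (Real.log 2 * C) := Real.exp_pos _
    rw [h2C]
    have hden : 0 < Real.exp (Real.log 2 * C) * N₀ + P * h := by positivity
    rw [Real.logb, Real.logb, Real.log_div (by positivity) (ne_of_gt hden),
      Real.log_mul (ne_of_gt hepos) (ne_of_gt hA), Real.log_exp,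
      show Real.exp (Real.log 2 * C) * N₀ = N₀ * Real.exp (Real.log 2 * C) by ring]
    field_simp
    ring
  rw [hfun]
  exact aux_strictconvex (γ - w) (w * Real.logb 2 (P * h + N₀)) (w / Real.log 2)
    (Real.log 2) N₀ (P * h) (by positivity) hL hN hB
end

section
/- Let P, h, N₀, γ, w > 0 be real numbers and define g(C) = γ·C − w · log₂(2^C · (P·h + N₀) / (2^C · N₀ + P·h)). Define C* = log₂((P·h/N₀)·(w/γ − 1)) if w > γ and (P·h/N₀)·(w/γ − 1) > 1, and C* = 0 otherwise. Then C* ≥ 0, and for every C ≥ 0 with C ≠ C* one has g(C*) < g(C); i.e., C* is the unique minimizer of g over [0, ∞). -/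
open Classical in
/-- The optimal per-flow fronthaul capacity: `C* = log₂((Ph/N₀)(w/γ - 1))` when
`w > γ` and `(Ph/N₀)(w/γ - 1) > 1`, and `C* = 0` otherwise, is the unique minimizer
of `g(C) = γ C - w log₂(2^C (Ph+N₀)/(2^C N₀ + Ph))` over `[0, ∞)`. -/
theorem perStage_objective_unique_minimizer (P h N₀ γ w : ℝ)
    (hP : 0 < P) (hh : 0 < h) (hN : 0 < N₀) (hγ : 0 < γ) (hw : 0 < w)
    (g : ℝ → ℝ)
    (hg : ∀ C : ℝ, g C =
      γ * C - w * Real.logb 2 ((2 : ℝ) ^ C * (P * h + N₀) / ((2 : ℝ) ^ C * N₀ + P * h)))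
    (Cstar : ℝ)
    (hCstar : Cstar =
      if γ < w ∧ 1 < P * h / N₀ * (w / γ - 1)
      then Real.logb 2 (P * h / N₀ * (w / γ - 1)) else 0) :
    0 ≤ Cstar ∧ ∀ C : ℝ, 0 ≤ C → C ≠ Cstar → g Cstar < g C := by
  have ha0 : 0 < P * h := mul_pos hP hh
  have hden : ∀ C : ℝ, (0:ℝ) < (2:ℝ) ^ C * N₀ + P * h := fun C => by positivity
  have hlog2 : (0:ℝ) < Real.log 2 := Real.log_pos one_lt_two
  -- rewrite g
  have hg' : ∀ C : ℝ, g C = (γ - w) * C - w * Real.logb 2 (P * h + N₀)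
      + w * (Real.log ((2:ℝ) ^ C * N₀ + P * h) / Real.log 2) := by
    intro C
    have h1 : ((2:ℝ) ^ C) ≠ 0 := ne_of_gt (Real.rpow_pos_of_pos two_pos C)
    rw [hg, Real.logb_div (by positivity) (ne_of_gt (hden C)),
      Real.logb_mul h1 (by positivity), Real.logb_rpow two_pos (by norm_num)]
    simp only [Real.logb]
    ring
  -- derivative
  have hD : ∀ C : ℝ, HasDerivAt g
      ((γ - w) + w * ((2:ℝ) ^ C * N₀) / ((2:ℝ) ^ C * N₀ + P * h)) C := by
    intro C
    have hfun : g = fun x => (γ - w) * x - w * Real.logb 2 (P * h + N₀)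
        + w * (Real.log ((2:ℝ) ^ x * N₀ + P * h) / Real.log 2) := funext hg'
    rw [hfun]
    have h1 : HasDerivAt (fun x : ℝ => (2:ℝ) ^ x * N₀ + P * h)
        ((2:ℝ) ^ C * Real.log 2 * N₀) C :=
      (((Real.hasStrictDerivAt_const_rpow two_pos C).hasDerivAt).mul_const N₀).add_const _
    have h2 : HasDerivAt (fun x : ℝ => Real.log ((2:ℝ) ^ x * N₀ + P * h))
        ((2:ℝ) ^ C * Real.log 2 * N₀ / ((2:ℝ) ^ C * N₀ + P * h)) C :=
      h1.log (ne_of_gt (hden C))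
    have h3 := (((hasDerivAt_id C).const_mul (γ - w)).sub_const
        (w * Real.logb 2 (P * h + N₀))).add (((h2.div_const (Real.log 2)).const_mul w))
    refine h3.congr_deriv ?_
    have := hden C
    have hl2 := hlog2.ne'
    field_simp
  -- sign of derivative
  have hsign : ∀ C : ℝ, (γ - w) + w * ((2:ℝ) ^ C * N₀) / ((2:ℝ) ^ C * N₀ + P * h)
      = (γ * (N₀ * (2:ℝ) ^ C) - (w - γ) * (P * h)) / ((2:ℝ) ^ C * N₀ + P * h) := by
    intro C
    have := hden C
    field_simp
    ring
  by_cases hcond : γ < w ∧ 1 < P * h / N₀ * (w / γ - 1)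
  · -- interior optimum
    set K := P * h / N₀ * (w / γ - 1) with hK
    have hK1 : (1:ℝ) < K := hcond.2
    have hCs : Cstar = Real.logb 2 K := by rw [hCstar, if_pos hcond]
    have hCspos : 0 < Cstar := by rw [hCs]; exact Real.logb_pos one_lt_two hK1
    have h2Cs : (2:ℝ) ^ Cstar = K := by
      rw [hCs]; exact Real.rpow_logb two_pos (by norm_num) (lt_trans one_pos hK1)
    have hthr : γ * (N₀ * K) = (w - γ) * (P * h) := by
      rw [hK]; field_simp
    have hmono : StrictMonoOn g (Set.Ici Cstar) := by
      apply strictMonoOn_of_deriv_pos (convex_Ici _)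
        (fun x _ => (hD x).continuousAt.continuousWithinAt)
      intro x hx
      rw [interior_Ici, Set.mem_Ioi] at hx
      rw [(hD x).deriv, hsign]
      apply div_pos _ (hden x)
      have h2x : K < (2:ℝ) ^ x := by
        rw [← h2Cs]; exact Real.rpow_lt_rpow_left_iff one_lt_two |>.mpr hx
      nlinarith [mul_lt_mul_of_pos_left h2x (mul_pos hγ hN)]
    have hanti : StrictAntiOn g (Set.Iic Cstar) := by
      apply strictAntiOn_of_deriv_neg (convex_Iic _)
        (fun x _ => (hD x).continuousAt.continuousWithinAt)
      intro x hx
      rw [interior_Iic, Set.mem_Iio] at hx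
      rw [(hD x).deriv, hsign]
      apply div_neg_of_neg_of_pos _ (hden x)
      have h2x : (2:ℝ) ^ x < K := by
        rw [← h2Cs]; exact Real.rpow_lt_rpow_left_iff one_lt_two |>.mpr hx
      nlinarith [mul_lt_mul_of_pos_left h2x (mul_pos hγ hN)]
    refine ⟨le_of_lt hCspos, fun C hC hne => ?_⟩
    rcases lt_or_gt_of_ne hne with hlt | hgt
    · exact hanti (Set.mem_Iic.mpr hlt.le) (Set.mem_Iic.mpr le_rfl) hlt
    · exact hmono (Set.mem_Ici.mpr le_rfl) (Set.mem_Ici.mpr hgt.le) hgt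
  · -- boundary optimum
    have hCs : Cstar = 0 := by rw [hCstar, if_neg hcond]
    have hmono : StrictMonoOn g (Set.Ici (0:ℝ)) := by
      apply strictMonoOn_of_deriv_pos (convex_Ici _)
        (fun x _ => (hD x).continuousAt.continuousWithinAt)
      intro x hx
      rw [interior_Ici, Set.mem_Ioi] at hx
      rw [(hD x).deriv, hsign]
      apply div_pos _ (hden x)
      have h2x : (1:ℝ) < (2:ℝ) ^ x := Real.one_lt_rpow_iff_of_pos two_pos |>.mpr (Or.inl ⟨one_lt_two, hx⟩)
      rcases le_or_gt w γ with hle | hlt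
      · nlinarith [mul_pos (mul_pos hγ hN) (Real.rpow_pos_of_pos two_pos x),
          mul_nonpos_of_nonpos_of_nonneg (by linarith : w - γ ≤ 0) ha0.le]
      · have hKle : P * h / N₀ * (w / γ - 1) ≤ 1 := by
          by_contra hcon
          exact hcond ⟨hlt, lt_of_not_ge hcon⟩
        have : (w - γ) * (P * h) ≤ γ * N₀ := by
          have h1 : P * h / N₀ * (w / γ - 1) * (N₀ * γ) ≤ 1 * (N₀ * γ) := by
            apply mul_le_mul_of_nonneg_right hKle (by positivity)
          calc (w - γ) * (P * h) = P * h / N₀ * (w / γ - 1) * (N₀ * γ) := by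
                field_simp
            _ ≤ 1 * (N₀ * γ) := h1
            _ = γ * N₀ := by ring
        nlinarith [mul_lt_mul_of_pos_left h2x (mul_pos hγ hN)]
    rw [hCs]
    refine ⟨le_refl _, fun C hC hne => ?_⟩
    have hCpos : 0 < C := lt_of_le_of_ne hC (Ne.symm hne)
    exact hmono (Set.mem_Ici.mpr le_rfl) (Set.mem_Ici.mpr hC) hCpos
end

section
/- Let P, h, N₀ > 0 be real numbers and for C > 0 define the rate R(C) = log₂(1 + P·h/(N₀ + (P·h + N₀)/(2^C − 1))). Then (i) for every C > 0, R(C) = log₂(2^C · (P·h + N₀)/(2^C · N₀ + P·h)); (ii) R is strictly increasing and strictly concave on (0, ∞); (iii) R(C) → 0 as C → 0⁺; and (iv) R(C) → log₂(1 + P·h/N₀) as C → ∞. -/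
open Filter

/-- Properties of the per-flow uplink rate
`R(C) = log₂(1 + Ph/(N₀ + (Ph+N₀)/(2^C - 1)))` for `C > 0`:
(i) the alternative form `R(C) = log₂(2^C (Ph+N₀)/(2^C N₀ + Ph))`;
(ii) strict monotonicity and strict concavity on `(0,∞)`;
(iii) `R(C) → 0` as `C → 0⁺`; (iv) `R(C) → log₂(1 + Ph/N₀)` as `C → ∞`. -/
theorem uplink_rate_properties (P h N₀ : ℝ) (hP : 0 < P) (hh : 0 < h) (hN : 0 < N₀)
    (R : ℝ → ℝ)
    (hR : ∀ C ∈ Set.Ioi (0 : ℝ),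
      R C = Real.logb 2 (1 + P * h / (N₀ + (P * h + N₀) / ((2 : ℝ) ^ C - 1)))) :
    (∀ C ∈ Set.Ioi (0 : ℝ),
        R C = Real.logb 2 ((2 : ℝ) ^ C * (P * h + N₀) / ((2 : ℝ) ^ C * N₀ + P * h))) ∧
    StrictMonoOn R (Set.Ioi (0 : ℝ)) ∧
    StrictConcaveOn ℝ (Set.Ioi (0 : ℝ)) R ∧
    Tendsto R (nhdsWithin 0 (Set.Ioi (0 : ℝ))) (nhds 0) ∧
    Tendsto R atTop (nhds (Real.logb 2 (1 + P * h / N₀))) := by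
  have ha0 : 0 < P * h := mul_pos hP hh
  set a : ℝ := P * h with ha
  set L : ℝ := Real.log 2 with hLdef
  have hL0 : 0 < L := Real.log_pos one_lt_two
  set u : ℝ → ℝ := fun C => a * Real.exp (-(L * C)) with hu
  have hu0 : ∀ C, 0 < u C := fun C => mul_pos ha0 (Real.exp_pos _)
  set g : ℝ → ℝ := fun C => N₀ + u C with hg
  have hg0 : ∀ C, 0 < g C := fun C => add_pos hN (hu0 C)
  set f : ℝ → ℝ := fun C => Real.logb 2 (a + N₀) - Real.log (g C) / L with hf
  have hrpow : ∀ C : ℝ, (2:ℝ) ^ C = Real.exp (L * C) := fun C =>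
    Real.rpow_def_of_pos two_pos C
  have hxpos : ∀ C : ℝ, 0 < (2:ℝ) ^ C := fun C => Real.rpow_pos_of_pos two_pos C
  have hue : ∀ C : ℝ, u C = a / (2:ℝ) ^ C := by
    intro C
    rw [hrpow]
    simp [hu, Real.exp_neg, div_eq_mul_inv]
  -- part (i)
  have part1 : ∀ C ∈ Set.Ioi (0:ℝ),
      R C = Real.logb 2 ((2:ℝ) ^ C * (a + N₀) / ((2:ℝ) ^ C * N₀ + a)) := by
    intro C hC
    have hC0 : (0:ℝ) < C := hC
    have hx1 : 1 < (2:ℝ) ^ C := by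
      rw [hrpow]; exact Real.one_lt_exp_iff.mpr (mul_pos hL0 hC0)
    have hx0 : (0:ℝ) < (2:ℝ) ^ C := lt_trans one_pos hx1
    have hden : (0:ℝ) < N₀ + (a + N₀) / ((2:ℝ) ^ C - 1) :=
      add_pos hN (div_pos (add_pos ha0 hN) (by linarith))
    rw [hR C hC]
    congr 1
    have h1 : (2:ℝ) ^ C - 1 ≠ 0 := by linarith
    have h2 : N₀ + (a + N₀) / ((2:ℝ) ^ C - 1) ≠ 0 := ne_of_gt hden
    have h3 : (2:ℝ) ^ C * N₀ + a ≠ 0 := by positivity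
    clear hR hue hu0 hg0 hf hg hu hrpow hxpos
    clear f g u
    generalize hX : (2:ℝ) ^ C = X at *
    clear_value a
    have h4 : a + X * N₀ ≠ 0 := by rw [add_comm]; exact h3
    have h5 : N₀ * (X - 1) + (a + N₀) ≠ 0 := by nlinarith
    field_simp [h5]
    ring
  -- R agrees with f on Ioi 0
  have heq : ∀ C ∈ Set.Ioi (0:ℝ), R C = f C := by
    intro C hC
    rw [part1 C hC, hf]
    have hx0 : (0:ℝ) < (2:ℝ) ^ C := hxpos C
    have harg : (2:ℝ) ^ C * (a + N₀) / ((2:ℝ) ^ C * N₀ + a) = (a + N₀) / g C := by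
      rw [hg]
      simp only [hue C]
      rw [div_eq_div_iff (by positivity) (by positivity)]
      field_simp
    rw [harg, Real.logb, Real.log_div (by positivity) (ne_of_gt (hg0 C))]
    rw [Real.logb, ← hLdef]
    ring
  -- derivatives
  have hu' : ∀ C, HasDerivAt u (-(L * u C)) C := by
    intro C
    have h1 : HasDerivAt (fun C : ℝ => -(L * C)) (-L) C := by
      exact (((hasDerivAt_id C).const_mul L).neg).congr_deriv (by simp)
    have h2 := h1.exp
    have h3 := h2.const_mul a
    refine h3.congr_deriv ?_
    simp [hu]; ring
  have hg' : ∀ C, HasDerivAt g (-(L * u C)) C := fun C => (hu' C).const_add N₀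
  have hf' : ∀ C, HasDerivAt f (u C / g C) C := by
    intro C
    have h1 := ((hg' C).log (ne_of_gt (hg0 C))).div_const L
    have h2 := h1.const_sub (Real.logb 2 (a + N₀))
    refine h2.congr_deriv ?_
    field_simp
  have hderiv : deriv f = fun C => u C / g C := funext fun C => (hf' C).deriv
  have hd' : ∀ C, HasDerivAt (fun C => u C / g C) (-(L * u C * N₀) / g C ^ 2) C := by
    intro C
    have h1 := (hu' C).div (hg' C) (ne_of_gt (hg0 C))
    refine h1.congr_deriv ?_
    rw [hg]
    field_simp
    ring
  -- strict monotonicity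
  have hmono : StrictMono f := strictMono_of_deriv_pos fun C => by
    rw [hderiv]; exact div_pos (hu0 C) (hg0 C)
  have hmonoR : StrictMonoOn R (Set.Ioi (0:ℝ)) :=
    (hmono.strictMonoOn _).congr fun C hC => (heq C hC).symm
  -- strict concavity
  have hconc : StrictConcaveOn ℝ (Set.Ioi (0:ℝ)) f := by
    apply strictConcaveOn_of_deriv2_neg (convex_Ioi 0)
      (fun C _ => (hf' C).continuousAt.continuousWithinAt)
    intro C _
    have : deriv^[2] f C = deriv (deriv f) C := by simp [Function.iterate_succ]
    rw [this, hderiv, (hd' C).deriv]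
    have := hu0 C
    have := hg0 C
    apply div_neg_of_neg_of_pos
    · have h1 : 0 < L * u C * N₀ := by positivity
      linarith
    · positivity
  have hconcR : StrictConcaveOn ℝ (Set.Ioi (0:ℝ)) R := by
    refine ⟨hconc.1, fun x hx y hy hxy p q hp hq hpq => ?_⟩
    rw [heq x hx, heq y hy, heq _ (hconc.1 hx hy hp.le hq.le hpq)]
    exact hconc.2 hx hy hxy hp hq hpq
  -- limit at 0⁺
  have hf0 : f 0 = 0 := by
    have hg00 : g 0 = a + N₀ := by simp [hg, hu]; ring
    rw [hf]
    simp only [hg00, Real.logb, ← hLdef]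
    ring
  have hlim0 : Tendsto R (nhdsWithin 0 (Set.Ioi (0:ℝ))) (nhds 0) := by
    have h1 : Tendsto f (nhdsWithin 0 (Set.Ioi (0:ℝ))) (nhds 0) := by
      have := (hf' 0).continuousAt.continuousWithinAt (s := Set.Ioi (0:ℝ))
      rw [ContinuousWithinAt, hf0] at this
      exact this
    apply h1.congr'
    filter_upwards [self_mem_nhdsWithin] with C hC using (heq C hC).symm
  -- limit at ∞
  have hlimtop : Tendsto R atTop (nhds (Real.logb 2 (1 + a / N₀))) := by
    have hu_lim : Tendsto u atTop (nhds 0) := by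
      have h1 : Tendsto (fun C : ℝ => -(L * C)) atTop atBot := by
        apply tendsto_neg_atBot_iff.mpr
        exact Tendsto.const_mul_atTop hL0 tendsto_id
      have h2 := Real.tendsto_exp_atBot.comp h1
      simpa [hu] using h2.const_mul a
    have hg_lim : Tendsto g atTop (nhds N₀) := by
      simpa using tendsto_const_nhds.add hu_lim
    have hlog_lim : Tendsto (fun C => Real.log (g C) / L) atTop
        (nhds (Real.log N₀ / L)) :=
      ((Real.continuousAt_log (ne_of_gt hN)).tendsto.comp hg_lim).div_const L
    have hF : Tendsto f atTop (nhds (Real.logb 2 (a + N₀) - Real.log N₀ / L)) :=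
      tendsto_const_nhds.sub hlog_lim
    have hval : Real.logb 2 (a + N₀) - Real.log N₀ / L = Real.logb 2 (1 + a / N₀) := by
      have : (1 : ℝ) + a / N₀ = (a + N₀) / N₀ := by field_simp; ring
      rw [this, Real.logb, Real.logb, Real.log_div (by positivity) (ne_of_gt hN), ← hLdef]
      ring
    rw [← hval]
    apply hF.congr'
    filter_upwards [eventually_gt_atTop (0:ℝ)] with C hC using (heq C hC).symm
  exact ⟨part1, hmonoR, hconcR, hlim0, hlimtop⟩
end

section
/- Let a, γ, β, λ > 0 be real numbers with λ < (e^a / ln 2) · E1(a), let d > γ be the unique number satisfying (e^a / ln 2) · E1(a·d/(d − γ)) = λ, and set c∞ = (γ / ln 2) · E1(a·γ/(d − γ)). Define, for ν > γ, Q(ν) = (λ/β) · ( (e^a / ln 2) · ν · E1(a·ν/(ν − γ)) − λ·ν − (γ / ln 2) · E1(a·γ/(ν − γ)) + c∞ ). Then Q(d) = 0, Q is strictly increasing on [d, ∞), and Q(ν) → ∞ as ν → ∞; hence Q restricted to [d, ∞) is a bijection onto [0, ∞). -/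
open MeasureTheory Filter

open Set

lemma E1_integrableOn {z : ℝ} (hz : 0 < z) :
    IntegrableOn (fun t => Real.exp (-t) / t) (Set.Ioi z) := by
  have hmeas : AEStronglyMeasurable (fun t => Real.exp (-t) / t)
      (volume.restrict (Set.Ioi z)) := by
    apply ContinuousOn.aestronglyMeasurable _ measurableSet_Ioi
    intro t ht
    exact (Real.continuous_exp.comp continuous_neg).continuousOn.div
      continuousOn_id (fun s hs => ne_of_gt (hz.trans hs)) t ht
  have hint : IntegrableOn (fun t => Real.exp (-(1:ℝ) * t) / z) (Set.Ioi z) :=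
    ((exp_neg_integrableOn_Ioi z one_pos).div_const z)
  refine Integrable.mono' hint hmeas ?_
  filter_upwards [ae_restrict_mem measurableSet_Ioi] with t ht
  rw [Real.norm_eq_abs, abs_div, abs_of_pos (Real.exp_pos _), abs_of_pos (hz.trans ht), neg_one_mul]
  exact div_le_div_of_nonneg_left (Real.exp_pos _).le hz ht.le

lemma E1_split {x y : ℝ} (hx : 0 < x) (hxy : x ≤ y) :
    expIntegralE1 x = (∫ t in Set.Ioc x y, Real.exp (-t) / t) + expIntegralE1 y := by
  have hy : 0 < y := hx.trans_le hxy
  have h1 : IntegrableOn (fun t => Real.exp (-t) / t) (Set.Ioc x y) :=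
    (E1_integrableOn hx).mono_set Set.Ioc_subset_Ioi_self
  have h2 := E1_integrableOn hy
  rw [expIntegralE1, ← Set.Ioc_union_Ioi_eq_Ioi hxy,
    setIntegral_union (Set.Ioc_disjoint_Ioi le_rfl) measurableSet_Ioi h1 h2]
  rfl

lemma E1_pos {z : ℝ} (hz : 0 < z) : 0 < expIntegralE1 z := by
  rw [expIntegralE1]
  apply setIntegral_pos_iff_support_of_nonneg_ae _ _ |>.mpr
  · have hsub : Set.Ioi z ⊆ (Function.support fun t => Real.exp (-t) / t) ∩ Set.Ioi z := by
      intro t ht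
      exact ⟨ne_of_gt (div_pos (Real.exp_pos _) (hz.trans ht)), ht⟩
    calc (0:ENNReal) < ⊤ := by simp
    _ = volume (Set.Ioi z) := (Real.volume_Ioi).symm
    _ ≤ _ := measure_mono hsub
  · filter_upwards [ae_restrict_mem measurableSet_Ioi] with t ht
    exact (div_pos (Real.exp_pos _) (hz.trans ht)).le
  · exact E1_integrableOn hz

lemma E1_strictAnti {x y : ℝ} (hx : 0 < x) (hxy : x < y) :
    expIntegralE1 y < expIntegralE1 x := by
  rw [E1_split hx hxy.le]
  have hpos : 0 < ∫ t in Set.Ioc x y, Real.exp (-t) / t := by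
    apply setIntegral_pos_iff_support_of_nonneg_ae _ _ |>.mpr
    · have hsub : Set.Ioc x y ⊆ (Function.support fun t => Real.exp (-t) / t) ∩ Set.Ioc x y := by
        intro t ht
        exact ⟨ne_of_gt (div_pos (Real.exp_pos _) (hx.trans ht.1)), ht⟩
      calc (0:ENNReal) < ENNReal.ofReal (y - x) := by
            simp [ENNReal.ofReal_pos, sub_pos.mpr hxy]
      _ = volume (Set.Ioc x y) := (Real.volume_Ioc).symm
      _ ≤ _ := measure_mono hsub
    · filter_upwards [ae_restrict_mem measurableSet_Ioc] with t ht
      exact (div_pos (Real.exp_pos _) (hx.trans ht.1)).le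
    · exact (E1_integrableOn hx).mono_set Set.Ioc_subset_Ioi_self
  linarith

lemma E1_hasDerivAt {z : ℝ} (hz : 0 < z) :
    HasDerivAt expIntegralE1 (-(Real.exp (-z) / z)) z := by
  set y := z / 2 with hy
  have hy0 : 0 < y := by positivity
  have hkey : ∀ x ∈ Set.Ioi (0:ℝ),
      expIntegralE1 x = expIntegralE1 y - ∫ t in y..x, Real.exp (-t) / t := by
    intro x hx
    rcases le_total y x with h | h
    · rw [intervalIntegral.integral_of_le h, E1_split hy0 h]
      ring
    · rw [intervalIntegral.integral_symm, intervalIntegral.integral_of_le h,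
        E1_split hx h]
      ring
  have hint : IntervalIntegrable (fun t => Real.exp (-t) / t) volume y z := by
    apply IntegrableOn.intervalIntegrable
    rw [Set.uIcc_of_le (by linarith)]
    refine (E1_integrableOn (show (0:ℝ) < y/2 by positivity)).mono_set ?_
    intro t ht
    simp only [Set.mem_Ioi]
    have := ht.1
    simp only [Set.mem_Icc] at ht
    linarith [ht.1]
  have hmeas : StronglyMeasurableAtFilter (fun t => Real.exp (-t) / t) (nhds z) volume := by
    refine ContinuousOn.stronglyMeasurableAtFilter isOpen_Ioi ?_ z hz
    intro t ht
    exact (Real.continuous_exp.comp continuous_neg).continuousOn.div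
      continuousOn_id (fun s hs => ne_of_gt hs) t ht
  have hcont : ContinuousAt (fun t => Real.exp (-t) / t) z :=
    ContinuousAt.div (Real.continuous_exp.comp continuous_neg).continuousAt
      continuousAt_id (ne_of_gt hz)
  have h0 := intervalIntegral.integral_hasDerivAt_right hint hmeas hcont
  have hderiv := h0.const_sub (expIntegralE1 y)
  refine hderiv.congr_of_eventuallyEq ?_
  filter_upwards [isOpen_Ioi.mem_nhds (show z ∈ Set.Ioi 0 from hz)] with x hx
  exact hkey x hx

lemma E1_le_one : expIntegralE1 1 ≤ 1 := by
  have h1 : expIntegralE1 1 ≤ ∫ t in Set.Ioi (1:ℝ), Real.exp (-t) := by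
    rw [expIntegralE1]
    apply setIntegral_mono_on (E1_integrableOn one_pos)
      (exp_neg_integrableOn_Ioi 1 one_pos |>.congr_fun (by intro x _; simp [neg_one_mul]) measurableSet_Ioi)
      measurableSet_Ioi
    intro t ht
    rw [div_le_iff₀ (by linarith [Set.mem_Ioi.mp ht])]
    nlinarith [Real.exp_pos (-t), Set.mem_Ioi.mp ht]
  rw [integral_exp_neg_Ioi] at h1
  calc expIntegralE1 1 ≤ Real.exp (-1) := h1
  _ ≤ 1 := by rw [Real.exp_le_one_iff]; norm_num

lemma E1_le_log {z : ℝ} (hz : 0 < z) (hz1 : z ≤ 1) : expIntegralE1 z ≤ -Real.log z + 1 := by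
  have hsplit := E1_split hz hz1
  have h1 : (∫ t in Set.Ioc z 1, Real.exp (-t) / t) ≤ ∫ t in Set.Ioc z 1, 1 / t := by
    apply setIntegral_mono_on ((E1_integrableOn hz).mono_set Set.Ioc_subset_Ioi_self)
    · refine (ContinuousOn.integrableOn_Icc ?_).mono_set Set.Ioc_subset_Icc_self
      exact continuousOn_const.div continuousOn_id (fun t ht => ne_of_gt (lt_of_lt_of_le hz ht.1))
    · exact measurableSet_Ioc
    · intro t ht
      have htpos : 0 < t := hz.trans ht.1
      gcongr
      exact Real.exp_le_one_iff.mpr (by linarith)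
  have h2 : (∫ t in Set.Ioc z 1, (1:ℝ) / t) = -Real.log z := by
    rw [← intervalIntegral.integral_of_le hz1, integral_one_div]
    · rw [Real.log_div one_ne_zero (ne_of_gt hz), Real.log_one]
      ring
    · intro h
      rw [Set.uIcc_of_le hz1] at h
      exact absurd h.1 (by linarith)
  linarith [E1_le_one, hsplit, h1, h2.symm ▸ h1]


lemma tendsto_linear_sub_log (ε K C : ℝ) (hε : 0 < ε) :
    Tendsto (fun x : ℝ => ε * x - K * Real.log x + C) atTop atTop := by
  have hK : ∀ x : ℝ, K * Real.log x ≤ |K| * |Real.log x| := by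
    intro x
    calc K * Real.log x ≤ |K * Real.log x| := le_abs_self _
    _ = |K| * |Real.log x| := abs_mul _ _
  have hlo := Real.isLittleO_log_id_atTop
  have hev := hlo.def (show 0 < ε / (2 * (|K| + 1)) by positivity)
  refine tendsto_atTop_mono' atTop (f₁ := fun x => ε / 2 * x + C) ?_ ?_
  swap
  · apply tendsto_atTop_add_const_right
    exact (tendsto_id.const_mul_atTop (by positivity))
  · filter_upwards [hev, eventually_ge_atTop (0:ℝ)] with x hx hx0
    simp only [Real.norm_eq_abs, id_eq] at hx
    have h1 : K * Real.log x ≤ ε / 2 * x := by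
      calc K * Real.log x ≤ |K| * |Real.log x| := hK x
      _ ≤ (|K| + 1) * |Real.log x| := by
            apply mul_le_mul_of_nonneg_right (by linarith) (abs_nonneg _)
      _ ≤ (|K| + 1) * (ε / (2 * (|K| + 1)) * |x|) := by
            apply mul_le_mul_of_nonneg_left hx (by positivity)
      _ = ε / 2 * |x| := by field_simp
      _ = ε / 2 * x := by rw [abs_of_nonneg hx0]
    linarith


/-- The parametric queue-length map
`Q(ν) = (λ/β)((e^a/ln 2) ν E1(aν/(ν-γ)) - λν - (γ/ln 2) E1(aγ/(ν-γ)) + c∞)`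
satisfies `Q(d) = 0`, is strictly increasing on `[d, ∞)`, tends to `∞`,
and is a bijection from `[d, ∞)` onto `[0, ∞)`. -/
theorem parametric_queue_bijection (a γ β lam : ℝ)
    (ha : 0 < a) (hγ : 0 < γ) (hβ : 0 < β) (hlam : 0 < lam)
    (hlt : lam < Real.exp a / Real.log 2 * expIntegralE1 a)
    (d : ℝ) (hd : γ < d)
    (hdEq : Real.exp a / Real.log 2 * expIntegralE1 (a * d / (d - γ)) = lam)
    (hdUniq : ∀ d' : ℝ, γ < d' →
      Real.exp a / Real.log 2 * expIntegralE1 (a * d' / (d' - γ)) = lam → d' = d)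
    (cInf : ℝ) (hcInf : cInf = γ / Real.log 2 * expIntegralE1 (a * γ / (d - γ)))
    (Q : ℝ → ℝ)
    (hQ : ∀ ν ∈ Set.Ioi γ,
      Q ν = lam / β * (Real.exp a / Real.log 2 * ν * expIntegralE1 (a * ν / (ν - γ))
        - lam * ν - γ / Real.log 2 * expIntegralE1 (a * γ / (ν - γ)) + cInf)) :
    Q d = 0 ∧ StrictMonoOn Q (Set.Ici d) ∧ Tendsto Q atTop atTop ∧
      Set.BijOn Q (Set.Ici d) (Set.Ici (0 : ℝ)) := by
  have hL : 0 < Real.log 2 := Real.log_pos one_lt_two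
  have hz1pos : ∀ ν : ℝ, γ < ν → 0 < a * ν / (ν - γ) := fun ν hν =>
    div_pos (mul_pos ha (hγ.trans hν)) (sub_pos.mpr hν)
  have hz2pos : ∀ ν : ℝ, γ < ν → 0 < a * γ / (ν - γ) := fun ν hν =>
    div_pos (mul_pos ha hγ) (sub_pos.mpr hν)
  have hz1lt : ∀ μ ν : ℝ, γ < μ → μ < ν → a * ν / (ν - γ) < a * μ / (μ - γ) := by
    intro μ ν hμ hμν
    rw [div_lt_div_iff₀ (by linarith) (by linarith)]
    nlinarith [mul_lt_mul_of_pos_left hμν (mul_pos ha hγ)]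
  -- Q d = 0
  have hQd0 : Q d = 0 := by
    rw [hQ d hd, hcInf]
    linear_combination (lam / β * d) * hdEq
  -- derivative of Q on Ioi γ
  have hderivF : ∀ ν : ℝ, γ < ν → HasDerivAt Q
      (lam / β * (Real.exp a / Real.log 2 * expIntegralE1 (a * ν / (ν - γ)) - lam)) ν := by
    intro ν hν
    have hne : ν - γ ≠ 0 := (sub_pos.mpr hν).ne'
    have hz1 := hz1pos ν hν
    have hz2 := hz2pos ν hν
    have hd1 : HasDerivAt (fun x : ℝ => a * x / (x - γ)) (-(a * γ) / (ν - γ) ^ 2) ν := by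
      have h := (((hasDerivAt_id ν).const_mul a).div ((hasDerivAt_id ν).sub_const γ) hne)
      refine h.congr_deriv ?_
      simp only [id_eq]
      field_simp
      ring
    have hd2 : HasDerivAt (fun x : ℝ => a * γ / (x - γ)) (-(a * γ) / (ν - γ) ^ 2) ν := by
      have h := ((hasDerivAt_const ν (a * γ)).div ((hasDerivAt_id ν).sub_const γ) hne)
      refine h.congr_deriv ?_
      simp only [id_eq]
      field_simp
      ring
    have hE1 : HasDerivAt (fun x : ℝ => expIntegralE1 (a * x / (x - γ)))
        (-(Real.exp (-(a * ν / (ν - γ))) / (a * ν / (ν - γ))) * (-(a * γ) / (ν - γ) ^ 2)) ν :=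
      HasDerivAt.comp (h₂ := expIntegralE1) ν (E1_hasDerivAt hz1) hd1
    have hE2 : HasDerivAt (fun x : ℝ => expIntegralE1 (a * γ / (x - γ)))
        (-(Real.exp (-(a * γ / (ν - γ))) / (a * γ / (ν - γ))) * (-(a * γ) / (ν - γ) ^ 2)) ν :=
      by exact (E1_hasDerivAt hz2).comp ν hd2
    have hmulν : HasDerivAt (fun x : ℝ => Real.exp a / Real.log 2 * x)
        (Real.exp a / Real.log 2) ν := by
      simpa using (hasDerivAt_id ν).const_mul (Real.exp a / Real.log 2)
    have hG := hmulν.mul hE1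
    have hF := (((hG.sub ((hasDerivAt_id ν).const_mul lam)).sub
      (hE2.const_mul (γ / Real.log 2))).add_const cInf).const_mul (lam / β)
    have hQF := hF.congr_of_eventuallyEq (f₁ := Q) (by
      filter_upwards [isOpen_Ioi.mem_nhds (show ν ∈ Set.Ioi γ from hν)] with x hx
      simpa using hQ x hx)
    refine hQF.congr_deriv ?_
    have hexp : Real.exp (-(a * γ / (ν - γ))) = Real.exp a * Real.exp (-(a * ν / (ν - γ))) := by
      rw [← Real.exp_add]
      congr 1
      field_simp
      ring
    rw [hexp]
    have hν0 : (0:ℝ) < ν := hγ.trans hν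
    field_simp
    ring
  -- positivity of the derivative beyond d
  have hpos : ∀ ν : ℝ, d < ν →
      0 < lam / β * (Real.exp a / Real.log 2 * expIntegralE1 (a * ν / (ν - γ)) - lam) := by
    intro ν hν
    have hνγ : γ < ν := hd.trans hν
    have h2 := E1_strictAnti (hz1pos ν hνγ) (hz1lt d ν hd hν)
    have h3 : lam < Real.exp a / Real.log 2 * expIntegralE1 (a * ν / (ν - γ)) := by
      rw [← hdEq]
      exact mul_lt_mul_of_pos_left h2 (by positivity)
    have h4 : 0 < Real.exp a / Real.log 2 * expIntegralE1 (a * ν / (ν - γ)) - lam := by linarith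
    positivity
  -- strict monotonicity
  have hmono : StrictMonoOn Q (Set.Ici d) := by
    apply strictMonoOn_of_deriv_pos (convex_Ici d)
    · intro x hx
      exact (hderivF x (lt_of_lt_of_le hd hx)).continuousAt.continuousWithinAt
    · intro x hx
      rw [interior_Ici] at hx
      rw [(hderivF x (hd.trans hx)).deriv]
      exact hpos x hx
  -- tendsto atTop
  have hεpos : 0 < Real.exp a / Real.log 2 * expIntegralE1 (a * (d+1) / ((d+1) - γ)) - lam := by
    have h2 := E1_strictAnti (hz1pos (d+1) (by linarith)) (hz1lt d (d+1) hd (by linarith))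
    have h3 : lam < Real.exp a / Real.log 2 * expIntegralE1 (a * (d+1) / ((d+1) - γ)) := by
      rw [← hdEq]
      exact mul_lt_mul_of_pos_left h2 (by positivity)
    linarith
  set ε := Real.exp a / Real.log 2 * expIntegralE1 (a * (d+1) / ((d+1) - γ)) - lam with hεdef
  have htends : Tendsto Q atTop atTop := by
    have hg := tendsto_linear_sub_log ε (γ / Real.log 2)
      (γ / Real.log 2 * Real.log (a * γ) - γ / Real.log 2 + cInf) hεpos
    have hg2 := hg.const_mul_atTop (show 0 < lam / β by positivity)
    refine tendsto_atTop_mono' atTop ?_ hg2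
    filter_upwards [eventually_ge_atTop (d+1), eventually_ge_atTop (γ + a * γ),
      eventually_gt_atTop (0:ℝ)] with ν h1 h2 hνpos
    have hνγ : γ < ν := by linarith
    rw [hQ ν hνγ]
    have hz2le1 : a * γ / (ν - γ) ≤ 1 := by
      rw [div_le_one (by linarith)]; linarith
    have hE2le : expIntegralE1 (a * γ / (ν - γ)) ≤ -(Real.log (a * γ / (ν - γ))) + 1 :=
      E1_le_log (hz2pos ν hνγ) hz2le1
    have hE1ge : expIntegralE1 (a * (d+1) / ((d+1) - γ)) ≤ expIntegralE1 (a * ν / (ν - γ)) := by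
      rcases eq_or_lt_of_le h1 with h | h
      · rw [h]
      · exact (E1_strictAnti (hz1pos ν hνγ) (hz1lt (d+1) ν (by linarith) h)).le
    have hlogz2 : Real.log (a * γ / (ν - γ)) = Real.log (a * γ) - Real.log (ν - γ) :=
      Real.log_div (by positivity) (by linarith : (0:ℝ) < ν - γ).ne'
    have hlogle : Real.log (ν - γ) ≤ Real.log ν := Real.log_le_log (by linarith) (by linarith)
    have key1 : lam + ε ≤ Real.exp a / Real.log 2 * expIntegralE1 (a * ν / (ν - γ)) := by
      rw [hεdef]
      have := mul_le_mul_of_nonneg_left hE1ge (show (0:ℝ) ≤ Real.exp a / Real.log 2 by positivity)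
      linarith
    have key1ν : lam * ν + ε * ν ≤ Real.exp a / Real.log 2 * ν * expIntegralE1 (a * ν / (ν - γ)) := by
      nlinarith [mul_le_mul_of_nonneg_right key1 hνpos.le]
    have key2 : expIntegralE1 (a * γ / (ν - γ)) ≤ Real.log ν - Real.log (a * γ) + 1 := by
      rw [hlogz2] at hE2le
      linarith
    have key2' : γ / Real.log 2 * expIntegralE1 (a * γ / (ν - γ)) ≤
        γ / Real.log 2 * (Real.log ν - Real.log (a * γ) + 1) :=
      mul_le_mul_of_nonneg_left key2 (by positivity)
    apply mul_le_mul_of_nonneg_left _ (le_of_lt (div_pos hlam hβ))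
    nlinarith [key1ν, key2']
  refine ⟨hQd0, hmono, htends, ?_, hmono.injOn, ?_⟩
  · intro x hx
    have : Q d ≤ Q x := hmono.monotoneOn Set.self_mem_Ici hx hx
    rw [hQd0] at this
    exact this
  · intro y hy
    have hy0 : (0:ℝ) ≤ y := hy
    obtain ⟨b, hb1, hb2⟩ := ((htends.eventually_ge_atTop y).and (eventually_ge_atTop d)).exists
    have hcont : ContinuousOn Q (Set.Icc d b) := fun x hx =>
      (hderivF x (lt_of_lt_of_le hd hx.1)).continuousAt.continuousWithinAt
    have hymem : y ∈ Set.Icc (Q d) (Q b) := ⟨by rw [hQd0]; exact hy0, hb1⟩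
    obtain ⟨x, hx, hxy⟩ := intermediate_value_Icc hb2 hcont hymem
    exact ⟨x, Set.Icc_subset_Ici_self hx, hxy⟩
end
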